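/- Set X(t) = z(t) + Y(t). If liminf_{t→∞} ‖X(t)‖ < +∞, then lim_{t→∞} z(t) = 0 and lim_{t→∞} X(t) = 0. Consequently, either lim_{t→∞} X(t) = 0 or lim_{t→∞} ‖X(t)‖ = +∞. -/

import Mathlib

set_option maxHeartbeats 1000000
open Filter Set

lemma barrier_aux (V g : ℝ → ℝ) (a c : ℝ)
    (hV : ∀ t, a ≤ t → HasDerivAt V (g t) t)
    (hg : ∀ t, a ≤ t → V t = c → g t < 0)
    (hVa : V a ≤ c) : ∀ t, a ≤ t → V t ≤ c := by
  intro t ht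
  by_contra hcon
  push_neg at hcon
  have hat : a < t := by
    rcases eq_or_lt_of_le ht with rfl | h
    · linarith
    · exact h
  have hcont : ∀ s, a ≤ s → ContinuousAt V s := fun s hs => (hV s hs).continuousAt
  set S : Set ℝ := {s | s ∈ Icc a t ∧ V s ≤ c} with hS
  have hSne : S.Nonempty := ⟨a, ⟨le_refl a, le_of_lt hat⟩, hVa⟩
  have hSbdd : BddAbove S := ⟨t, fun s hs => hs.1.2⟩
  have hVconOn : ContinuousOn V (Icc a t) := fun s hs => ((hcont s hs.1).continuousWithinAt)
  have hSclosed : IsClosed S := by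
    have heq : S = Icc a t ∩ V ⁻¹' Iic c := rfl
    rw [heq]
    exact hVconOn.preimage_isClosed_of_isClosed isClosed_Icc isClosed_Iic
  set u := sSup S with hu
  have huS : u ∈ S := hSclosed.csSup_mem hSne hSbdd
  have hau : a ≤ u := huS.1.1
  have hut : u ≤ t := huS.1.2
  have hVu_le : V u ≤ c := huS.2
  have hunet : u ≠ t := by intro h; rw [h] at hVu_le; linarith
  have hult : u < t := lt_of_le_of_ne hut hunet
  have hgt : ∀ s, u < s → s ≤ t → c < V s := by
    intro s hus hst
    by_contra h
    push_neg at h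
    have : s ∈ S := ⟨⟨le_trans hau (le_of_lt hus), hst⟩, h⟩
    exact absurd (le_csSup hSbdd this) (not_le.mpr hus)
  have hVu_eq : V u = c := by
    refine le_antisymm hVu_le ?_
    have h1 : Tendsto V (nhdsWithin u (Ioi u)) (nhds (V u)) :=
      ((hcont u hau).continuousWithinAt).tendsto
    refine ge_of_tendsto h1 ?_
    filter_upwards [Ioc_mem_nhdsGT_of_mem (⟨le_refl u, hult⟩ : u ∈ Ico u t)] with s hs
    exact le_of_lt (hgt s hs.1 hs.2)
  have hgu : g u < 0 := hg u hau hVu_eq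
  have hslope : Tendsto (slope V u) (nhdsWithin u {u}ᶜ) (nhds (g u)) :=
    hasDerivAt_iff_tendsto_slope.mp (hV u hau)
  have hslope' : Tendsto (slope V u) (nhdsWithin u (Ioi u)) (nhds (g u)) :=
    hslope.mono_left (nhdsWithin_mono u (fun s hs => ne_of_gt hs))
  have hev : ∀ᶠ s in nhdsWithin u (Ioi u), slope V u s < 0 :=
    hslope'.eventually_lt_const hgu
  have hev2 : ∀ᶠ s in nhdsWithin u (Ioi u), 0 < slope V u s := by
    filter_upwards [Ioc_mem_nhdsGT_of_mem (⟨le_refl u, hult⟩ : u ∈ Ico u t)] with s hs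
    have h1 : c < V s := hgt s hs.1 hs.2
    rw [slope_def_field, hVu_eq]
    exact div_pos (by linarith) (by linarith [hs.1])
  have : ∀ᶠ s in nhdsWithin u (Ioi u), False := by
    filter_upwards [hev, hev2] with s h1 h2; linarith
  exact this.exists.elim (fun _ h => h)

lemma reach_aux (V g : ℝ → ℝ) (a c δ : ℝ) (hδ : 0 < δ)
    (hV : ∀ t, a ≤ t → HasDerivAt V (g t) t)
    (hg : ∀ t, a ≤ t → c ≤ V t → g t ≤ -δ) :
    ∃ b, a ≤ b ∧ V b ≤ c := by
  by_contra hcon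
  push_neg at hcon
  have hge : ∀ t, a ≤ t → c < V t := fun t ht => hcon t ht
  set T := a + (V a - c) / δ + 1 with hT
  have haT : a ≤ T := by
    have h0 : 0 ≤ (V a - c) / δ := div_nonneg (by linarith [hge a le_rfl]) (le_of_lt hδ)
    show a ≤ a + (V a - c) / δ + 1
    linarith
  set W : ℝ → ℝ := fun t => V t + δ * t with hW
  have hanti : AntitoneOn W (Icc a T) := by
    apply antitoneOn_of_deriv_nonpos (convex_Icc a T)
    · intro s hs
      exact ((hV s hs.1).continuousAt.add (continuousAt_const.mul continuousAt_id)).continuousWithinAt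
    · intro s hs
      rw [interior_Icc] at hs
      exact ((hV s (le_of_lt hs.1)).add ((hasDerivAt_id s).const_mul δ)).differentiableAt.differentiableWithinAt
    · intro s hs
      rw [interior_Icc] at hs
      have hd : HasDerivAt W (g s + δ * 1) s :=
        (hV s (le_of_lt hs.1)).add ((hasDerivAt_id s).const_mul δ)
      rw [hd.deriv]
      have := hg s (le_of_lt hs.1) (le_of_lt (hge s (le_of_lt hs.1)))
      linarith
  have h1 : W T ≤ W a := hanti ⟨le_refl a, haT⟩ ⟨haT, le_refl T⟩ haT
  have h2 : V T ≤ V a - δ * (T - a) := by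
    simp only [hW] at h1; linarith
  have h3 : δ * (T - a) = (V a - c) + δ := by
    rw [hT]; field_simp; ring
  have := hge T haT
  linarith

lemma key_aux (V g : ℝ → ℝ) (a c C δ : ℝ) (hδ : 0 < δ) (hcC : c ≤ C) (hVa : V a ≤ C)
    (hV : ∀ t, a ≤ t → HasDerivAt V (g t) t)
    (hg : ∀ t, a ≤ t → c ≤ V t → V t ≤ C → g t ≤ -δ) :
    ∀ᶠ t in Filter.atTop, V t ≤ c := by
  have hC : ∀ t, a ≤ t → V t ≤ C :=
    barrier_aux V g a C hV (fun t ht hVt => lt_of_le_of_lt (hg t ht (hVt ▸ hcC) (le_of_eq hVt)) (by linarith)) hVa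
  have hg' : ∀ t, a ≤ t → c ≤ V t → g t ≤ -δ := fun t ht h => hg t ht h (hC t ht)
  obtain ⟨b, hab, hVb⟩ := reach_aux V g a c δ hδ hV hg'
  have hfin : ∀ t, b ≤ t → V t ≤ c := by
    refine barrier_aux V g b c (fun t ht => hV t (le_trans hab ht)) ?_ hVb
    intro t ht hVt
    exact lt_of_le_of_lt (hg' t (le_trans hab ht) (le_of_eq hVt.symm)) (by linarith)
  exact Filter.eventually_atTop.mpr ⟨b, hfin⟩



open Filter

theorem stmt_8 (d : ℕ) (hd : 1 ≤ d)
    (f : EuclideanSpace ℝ (Fin d) → EuclideanSpace ℝ (Fin d)) (hf : Continuous f)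
    (hf0 : f 0 = 0)
    (hdiss : ∀ x : EuclideanSpace ℝ (Fin d), x ≠ 0 → 0 < (inner ℝ x (f x) : ℝ))
    (Y z : ℝ → EuclideanSpace ℝ (Fin d))
    (hY : ContinuousOn Y (Set.Ici 0)) (hYlim : Tendsto Y atTop (nhds 0))
    (hz : ∀ t : ℝ, 0 ≤ t → HasDerivAt z (-f (z t + Y t) + Y t) t) :
    ((liminf (fun t : ℝ => (‖z t + Y t‖₊ : ENNReal)) atTop < ⊤) →
      Tendsto z atTop (nhds 0) ∧ Tendsto (fun t : ℝ => z t + Y t) atTop (nhds 0)) ∧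
    (Tendsto (fun t : ℝ => z t + Y t) atTop (nhds 0) ∨
      Tendsto (fun t : ℝ => ‖z t + Y t‖) atTop atTop) := by
  have main : liminf (fun t : ℝ => (‖z t + Y t‖₊ : ENNReal)) atTop < ⊤ →
      Tendsto z atTop (nhds 0) := by
    intro hlim
    obtain ⟨r, hr1, hr2⟩ := exists_between hlim
    have hfreq : ∃ᶠ t in atTop, (‖z t + Y t‖₊ : ENNReal) < r :=
      frequently_lt_of_liminf_lt (by isBoundedDefault) hr1
    set M : ℝ := r.toReal + 1 with hM
    have hM0 : (0:ℝ) ≤ r.toReal := ENNReal.toReal_nonneg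
    have hfreq' : ∃ᶠ t in atTop, ‖z t + Y t‖ < M := by
      refine hfreq.mono ?_
      intro t ht
      have h1 : ((‖z t + Y t‖₊ : ENNReal)).toReal < r.toReal :=
        ENNReal.toReal_lt_toReal ENNReal.coe_ne_top hr2.ne |>.mpr ht
      simp only [ENNReal.coe_toReal, coe_nnnorm] at h1
      linarith
    rw [NormedAddCommGroup.tendsto_nhds_zero]
    intro ε hε
    suffices h : ∀ᶠ t in atTop, ‖z t‖ ≤ ε/2 by
      filter_upwards [h] with t ht; linarith
    set εa : ℝ := min (ε/2) (M+1) with hεa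
    have hεa0 : 0 < εa := lt_min (by linarith) (by linarith)
    have hεaM : εa ≤ M + 1 := min_le_right _ _
    set R : ℝ := M + 2 with hR
    have hR0 : (0:ℝ) < R := by simp only [hR]; linarith
    -- compact annulus
    set A : Set (EuclideanSpace ℝ (Fin d)) :=
      Metric.closedBall 0 (R+1) \ Metric.ball 0 (εa/2) with hA
    have hAcomp : IsCompact A := (isCompact_closedBall 0 (R+1)).diff Metric.isOpen_ball
    have hAne : A.Nonempty := by
      refine ⟨(R+1) • EuclideanSpace.single (⟨0, hd⟩ : Fin d) (1:ℝ), ?_, ?_⟩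
      · rw [Metric.mem_closedBall, dist_zero_right, norm_smul,
          EuclideanSpace.norm_single]
        simp only [norm_one, mul_one, Real.norm_eq_abs]
        rw [abs_of_pos (by linarith)]
      · rw [Metric.mem_ball, dist_zero_right, norm_smul, EuclideanSpace.norm_single]
        simp only [norm_one, mul_one, Real.norm_eq_abs, not_lt]
        rw [abs_of_pos (by linarith)]
        linarith
    set φ : EuclideanSpace ℝ (Fin d) → ℝ := fun x => (inner ℝ x (f x) : ℝ) with hφdef
    have hφ : Continuous φ := continuous_id.inner hf
    obtain ⟨x₀, hx₀A, hx₀min⟩ := hAcomp.exists_isMinOn hAne hφ.continuousOn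
    set δ₀ : ℝ := φ x₀ with hδ₀def
    have hx₀norm : εa/2 ≤ ‖x₀‖ := by
      have := hx₀A.2
      rw [Metric.mem_ball, dist_zero_right, not_lt] at this
      exact this
    have hδ₀ : 0 < δ₀ := by
      apply hdiss x₀
      intro h0
      rw [h0, norm_zero] at hx₀norm
      linarith
    obtain ⟨K, hK⟩ :=
      (isCompact_closedBall (0 : EuclideanSpace ℝ (Fin d)) (R+1)).exists_bound_of_continuousOn
        hf.continuousOn
    set K' : ℝ := max K 0 with hK'def
    have hK'0 : (0:ℝ) ≤ K' := le_max_right _ _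
    have hK' : ∀ x ∈ Metric.closedBall (0 : EuclideanSpace ℝ (Fin d)) (R+1), ‖f x‖ ≤ K' :=
      fun x hx => le_trans (hK x hx) (le_max_left _ _)
    have hKR : (0:ℝ) < K' + R + 1 := by linarith
    set η : ℝ := min 1 (min (εa/2) (δ₀ / (2*(K'+R+1)))) with hη
    have hη0 : 0 < η := lt_min one_pos (lt_min (by linarith) (by positivity))
    have hη1 : η ≤ 1 := min_le_left _ _
    have hηεa : η ≤ εa/2 := le_trans (min_le_right _ _) (min_le_left _ _)
    have hη3 : η * (2*(K'+R+1)) ≤ δ₀ := by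
      have h1 : η ≤ δ₀ / (2*(K'+R+1)) := le_trans (min_le_right _ _) (min_le_right _ _)
      calc η * (2*(K'+R+1)) ≤ (δ₀ / (2*(K'+R+1))) * (2*(K'+R+1)) :=
            mul_le_mul_of_nonneg_right h1 (by linarith)
        _ = δ₀ := div_mul_cancel₀ _ (by linarith)
    have hevY : ∀ᶠ t in atTop, ‖Y t‖ < η :=
      NormedAddCommGroup.tendsto_nhds_zero.mp hYlim η hη0
    obtain ⟨T₀, hT₀⟩ := eventually_atTop.mp
      (hevY.and (eventually_ge_atTop (0:ℝ)))
    obtain ⟨a, haX, haT₀⟩ := (hfreq'.and_eventually (eventually_ge_atTop T₀)).exists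
    -- key application
    have hVderiv : ∀ t, a ≤ t →
        HasDerivAt (fun s => ‖z s‖^2) (2 * (inner ℝ (z t) (-f (z t + Y t) + Y t) : ℝ)) t := by
      intro t ht
      have ht0 : (0:ℝ) ≤ t := (hT₀ t (le_trans haT₀ ht)).2
      have h1 := HasDerivAt.inner ℝ (hz t ht0) (hz t ht0)
      simp only [real_inner_self_eq_norm_sq] at h1
      refine h1.congr_deriv ?_
      rw [real_inner_comm (-f (z t + Y t) + Y t) (z t)]
      ring
    have hgbound : ∀ t, a ≤ t → εa^2 ≤ ‖z t‖^2 → ‖z t‖^2 ≤ R^2 →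
        2 * (inner ℝ (z t) (-f (z t + Y t) + Y t) : ℝ) ≤ -δ₀ := by
      intro t ht hlo hhi
      have hYt : ‖Y t‖ < η := (hT₀ t (le_trans haT₀ ht)).1
      have hzlo : εa ≤ ‖z t‖ := by nlinarith [norm_nonneg (z t)]
      have hzhi : ‖z t‖ ≤ R := by nlinarith [norm_nonneg (z t)]
      have hXhi : ‖z t + Y t‖ ≤ R + 1 := by
        have := norm_add_le (z t) (Y t); linarith
      have hzX : ‖z t‖ ≤ ‖z t + Y t‖ + ‖Y t‖ := by
        have h := norm_add_le (z t + Y t) (-(Y t))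
        rw [add_neg_cancel_right, norm_neg] at h
        exact h
      have hXlo : εa/2 ≤ ‖z t + Y t‖ := by linarith
      have hXA : (z t + Y t) ∈ A := by
        constructor
        · rw [Metric.mem_closedBall, dist_zero_right]; exact hXhi
        · rw [Metric.mem_ball, dist_zero_right, not_lt]; exact hXlo
      have hmin : δ₀ ≤ (inner ℝ (z t + Y t) (f (z t + Y t)) : ℝ) :=
        isMinOn_iff.mp hx₀min _ hXA
      have hfb : ‖f (z t + Y t)‖ ≤ K' := hK' _ hXA.1
      have e1 : (inner ℝ (z t + Y t) (f (z t + Y t)) : ℝ) =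
          (inner ℝ (z t) (f (z t + Y t)) : ℝ) + (inner ℝ (Y t) (f (z t + Y t)) : ℝ) :=
        inner_add_left _ _ _
      have e3 : |(inner ℝ (Y t) (f (z t + Y t)) : ℝ)| ≤ η * K' := by
        refine le_trans (abs_real_inner_le_norm _ _) ?_
        exact mul_le_mul (le_of_lt hYt) hfb (norm_nonneg _) (by linarith)
      have e4 : |(inner ℝ (z t) (Y t) : ℝ)| ≤ R * η := by
        refine le_trans (abs_real_inner_le_norm _ _) ?_
        exact mul_le_mul hzhi (le_of_lt hYt) (norm_nonneg _) (by linarith)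
      rw [inner_add_right, inner_neg_right]
      rw [abs_le] at e3 e4
      nlinarith [hη3, hη0, e3.1, e3.2, e4.1, e4.2, hmin, e1]
    have hVa : ‖z a‖^2 ≤ R^2 := by
      have hYa : ‖Y a‖ < η := (hT₀ a haT₀).1
      have hza : ‖z a‖ ≤ ‖z a + Y a‖ + ‖Y a‖ := by
        have h := norm_add_le (z a + Y a) (-(Y a))
        rw [add_neg_cancel_right, norm_neg] at h
        exact h
      have : ‖z a‖ ≤ M + 1 := by linarith
      nlinarith [norm_nonneg (z a)]
    have hcC : εa^2 ≤ R^2 := by nlinarith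
    have hkey := key_aux (fun s => ‖z s‖^2)
      (fun t => 2 * (inner ℝ (z t) (-f (z t + Y t) + Y t) : ℝ)) a (εa^2) (R^2) δ₀ hδ₀ hcC hVa
      hVderiv hgbound
    filter_upwards [hkey] with t ht
    have : ‖z t‖ ≤ εa := by nlinarith [norm_nonneg (z t), hεa0]
    exact le_trans this (min_le_left _ _)
  constructor
  · intro hlim
    have h1 : Tendsto z atTop (nhds 0) := main hlim
    exact ⟨h1, by simpa using h1.add hYlim⟩
  · by_cases hlim : liminf (fun t : ℝ => (‖z t + Y t‖₊ : ENNReal)) atTop < ⊤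
    · left
      have h1 := main hlim
      simpa using h1.add hYlim
    · right
      have htop : liminf (fun t : ℝ => (‖z t + Y t‖₊ : ENNReal)) atTop = ⊤ := by
        rw [not_lt, top_le_iff] at hlim; exact hlim
      rw [tendsto_atTop]
      intro b
      have hb : ((Real.toNNReal b : NNReal) : ENNReal) <
          liminf (fun t : ℝ => (‖z t + Y t‖₊ : ENNReal)) atTop := by
        rw [htop]; exact ENNReal.coe_lt_top
      filter_upwards [eventually_lt_of_lt_liminf hb] with t ht
      have h1 : (b.toNNReal : NNReal) < ‖z t + Y t‖₊ := by exact_mod_cast ht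
      have h2 : ((b.toNNReal : NNReal) : ℝ) < ‖z t + Y t‖ := by
        rw [← coe_nnnorm]; exact_mod_cast h1
      have h3 : b ≤ ((b.toNNReal : NNReal) : ℝ) := by
        rw [Real.coe_toNNReal']; exact le_max_left _ _
      linarith
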